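/- Let $(\Omega,\mathscr F,\mathbb P,(\mathscr F_j)_{j=0}^\infty)$ be a filtered probability space and $(\xi_j)_{j=1}^\infty$ an adapted sequence of real random variables such that $\xi_j$ is independent of $\mathscr F_{j-1}$, $\mathsf E\xi_j=0$ and $\mathsf E\xi_j^2=\sigma_j^2\in(0,\infty)$; set $s_n^2=\sum_{j=1}^n\sigma_j^2$. Let $(\lambda_j)_{j=0}^{n-1}$ be adapted with $0\le\lambda_j\le\Lambda$ a.s., put $t_j=s_j^2/s_n^2$ ($t_0=0$) and $X_j=\frac{1}{s_n}\sum_{k=0}^{j-1}\lambda_k\xi_{k+1}$. Let $g:[0,1]\times\mathbb R\to\mathbb R$ satisfy $|g(t_1,x_1)-g(t_2,x_2)|\le K(|t_1-t_2|^{1/2}+|x_1-x_2|)^{\alpha}$ for some $K>0$, $\alpha\in(0,1]$. Then for any random variables $\widehat t_j$ with $\widehat t_j\in[t_j,t_{j+1}]$ a.s., $\Big|\mathsf E\sum_{j=0}^{n-1}\frac{\sigma_{j+1}^2}{s_n^2}\big(g(\widehat t_j,X_{j+1})-g(t_j,X_j)\big)\Big|\le K(1+\Lambda^{\alpha})\Big(\max_{1\le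 j\le n}\frac{\sigma_j}{s_n}\Big)^{\alpha}.$ -/

import Mathlib

open MeasureTheory ProbabilityTheory Filter

lemma my_rpow_add_le {a b p : ℝ} (ha : 0 ≤ a) (hb : 0 ≤ b) (hp : 0 ≤ p) (hp1 : p ≤ 1) :
    (a + b) ^ p ≤ a ^ p + b ^ p := by
  lift a to NNReal using ha
  lift b to NNReal using hb
  have := NNReal.rpow_add_le_add_rpow a b hp hp1
  exact_mod_cast this

lemma my_abs_rpow_le_one_add_sq {x α : ℝ} (hα : 0 < α) (hα1 : α ≤ 1) :
    |x| ^ α ≤ 1 + x ^ 2 := by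
  rcases le_or_gt |x| 1 with h | h
  · have := Real.rpow_le_one (abs_nonneg x) h hα.le
    nlinarith [sq_nonneg x]
  · have h1 : |x| ^ α ≤ |x| ^ (1 : ℝ) := Real.rpow_le_rpow_of_exponent_le h.le hα1
    rw [Real.rpow_one] at h1
    have h2 : |x| ≤ x ^ 2 := by nlinarith [sq_abs x, abs_nonneg x]
    nlinarith

lemma my_jensen {Ω : Type*} {mΩ : MeasurableSpace Ω} (P : Measure Ω) [IsProbabilityMeasure P]
    (f : Ω → ℝ) (hf : Measurable f) (σ α : ℝ) (hσ : 0 < σ) (hα : 0 < α) (hα1 : α ≤ 1)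
    (hint : Integrable (fun ω => f ω ^ 2) P) (hvar : ∫ ω, f ω ^ 2 ∂P = σ ^ 2) :
    ∫ ω, |f ω| ^ α ∂P ≤ σ ^ α := by
  set β : ℝ := α / 2 with hβ
  have hβ0 : 0 < β := by positivity
  have hβ1 : β ≤ 1 := by rw [hβ]; linarith
  have hc : (0 : ℝ) < σ ^ 2 := by positivity
  set c : ℝ := σ ^ 2 with hcdef
  set A : ℝ := c ^ β * (1 - β) with hAdef
  set B : ℝ := c ^ β * β / c with hBdef
  -- pointwise bound
  have hpt : ∀ ω, |f ω| ^ α ≤ A + B * f ω ^ 2 := by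
    intro ω
    set u : ℝ := f ω ^ 2 with hudef
    have hu : 0 ≤ u := sq_nonneg _
    have h1 : |f ω| ^ α = u ^ β := by
      rw [hudef, ← sq_abs, ← Real.rpow_natCast |f ω| 2, ← Real.rpow_mul (abs_nonneg _)]
      norm_num [hβ]
      ring_nf
    have h2 : u = c * (u / c) := by field_simp
    have h3 : u ^ β = c ^ β * (u / c) ^ β := by
      conv_lhs => rw [h2]
      rw [Real.mul_rpow hc.le (by positivity)]
    have h4 : (u / c) ^ β ≤ 1 + β * (u / c - 1) := by
      have := rpow_one_add_le_one_add_mul_self (s := u / c - 1) (by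
        have : 0 ≤ u / c := by positivity
        linarith) hβ0.le hβ1
      simpa using this
    have h5 : c ^ β * (u / c) ^ β ≤ c ^ β * (1 + β * (u / c - 1)) := by
      apply mul_le_mul_of_nonneg_left h4 (by positivity)
    have h6 : c ^ β * (1 + β * (u / c - 1)) = A + B * u := by
      rw [hAdef, hBdef]; field_simp; ring
    exact h1.trans_le (h3.trans_le (h5.trans_eq h6))
  have hmeas : Measurable fun ω => |f ω| ^ α := hf.abs.pow_const α
  have hint_rhs : Integrable (fun ω => A + B * f ω ^ 2) P :=
    (integrable_const A).add (hint.const_mul B)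
  have hint_lhs : Integrable (fun ω => |f ω| ^ α) P := by
    refine Integrable.mono ((integrable_const (1:ℝ)).add hint) hmeas.aestronglyMeasurable ?_
    filter_upwards with ω
    rw [Real.norm_eq_abs, Real.norm_eq_abs, abs_of_nonneg (Real.rpow_nonneg (abs_nonneg _) _)]
    exact (my_abs_rpow_le_one_add_sq hα hα1).trans (le_abs_self _)
  have hcalc : ∫ ω, |f ω| ^ α ∂P ≤ A + B * c := by
    have h7 : ∫ ω, (A + B * f ω ^ 2) ∂P = A + B * c := by
      rw [integral_add (integrable_const A) (hint.const_mul B), integral_const,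
        MeasureTheory.integral_const_mul, hvar]
      simp
    exact (integral_mono hint_lhs hint_rhs hpt).trans_eq h7
  have h8 : A + B * c = c ^ β := by
    rw [hAdef, hBdef]; field_simp; ring
  have h9 : c ^ β = σ ^ α := by
    rw [hcdef, ← Real.rpow_natCast σ 2, ← Real.rpow_mul hσ.le]
    norm_num [hβ]
    ring_nf
  calc ∫ ω, |f ω| ^ α ∂P ≤ A + B * c := hcalc
    _ = σ ^ α := h8.trans h9

lemma my_holder_cont (g : ℝ × ℝ → ℝ) (K α : ℝ) (hK : 0 < K) (hα : 0 < α)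
    (hg : ∀ t₁ ∈ Set.Icc (0:ℝ) 1, ∀ t₂ ∈ Set.Icc (0:ℝ) 1, ∀ x₁ x₂ : ℝ,
      |g (t₁, x₁) - g (t₂, x₂)| ≤ K * (Real.sqrt |t₁ - t₂| + |x₁ - x₂|) ^ α) :
    Continuous (fun p : ℝ × ℝ => g (max 0 (min p.1 1), p.2)) := by
  set c : ℝ → ℝ := fun u => max 0 (min u 1) with hc
  have hmem : ∀ u, c u ∈ Set.Icc (0:ℝ) 1 :=
    fun u => ⟨le_max_left _ _, max_le (by norm_num) (min_le_right _ _)⟩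
  have hlip : ∀ a b, |c a - c b| ≤ |a - b| := by
    intro a b
    have h1 : |c a - c b| = |max (min a 1) 0 - max (min b 1) 0| := by
      rw [hc]; simp only [max_comm]
    rw [h1]
    refine (abs_max_sub_max_le_abs _ _ _).trans ?_
    have := abs_min_sub_min_le_max a 1 b 1
    simpa using this
  rw [continuous_iff_continuousAt]
  intro p₀
  have key : ∀ p : ℝ × ℝ, |g (c p.1, p.2) - g (c p₀.1, p₀.2)| ≤
      K * (Real.sqrt |p.1 - p₀.1| + |p.2 - p₀.2|) ^ α := by
    intro p
    refine (hg _ (hmem p.1) _ (hmem p₀.1) p.2 p₀.2).trans ?_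
    refine mul_le_mul_of_nonneg_left (Real.rpow_le_rpow (by positivity)
      (add_le_add_left (Real.sqrt_le_sqrt (hlip _ _)) _) hα.le) hK.le
  have h2 : Tendsto (fun p : ℝ × ℝ => Real.sqrt |p.1 - p₀.1| + |p.2 - p₀.2|)
      (nhds p₀) (nhds 0) := by
    have hcont : Continuous fun p : ℝ × ℝ => Real.sqrt |p.1 - p₀.1| + |p.2 - p₀.2| := by
      fun_prop
    simpa using hcont.tendsto p₀
  have h1 : Tendsto (fun p : ℝ × ℝ => K * (Real.sqrt |p.1 - p₀.1| + |p.2 - p₀.2|) ^ α)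
      (nhds p₀) (nhds 0) := by
    have hca : ContinuousAt (fun u : ℝ => K * u ^ α) 0 :=
      (continuousAt_const : ContinuousAt (fun _ : ℝ => K) 0).mul
        (Real.continuousAt_rpow_const 0 α (Or.inr hα.le))
    have := hca.tendsto.comp h2
    simpa [Function.comp_def, Real.zero_rpow hα.ne'] using this
  rw [ContinuousAt, tendsto_iff_dist_tendsto_zero]
  refine squeeze_zero (fun p => dist_nonneg) (fun p => ?_) h1
  rw [Real.dist_eq]
  exact key p

/-- For a parabolically `α`-Hölder function `g` on `[0,1] × ℝ`,
`|E ∑ⱼ (σⱼ₊₁²/sₙ²)(g(t̂ⱼ, Xⱼ₊₁) - g(tⱼ, Xⱼ))| ≤ K (1 + Λ^α) (max₁≤ⱼ≤ₙ σⱼ/sₙ)^α`. -/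
theorem stmt_9 {Ω : Type*} {mΩ : MeasurableSpace Ω} (P : Measure Ω) [IsProbabilityMeasure P]
    (F : Filtration ℕ mΩ) (ξ : ℕ → Ω → ℝ) (σ s : ℕ → ℝ)
    (hadapt : ∀ j, 1 ≤ j → Measurable[F j] (ξ j))
    (hindep : ∀ j, 1 ≤ j →
      Indep (MeasurableSpace.comap (ξ j) inferInstance) (F (j - 1)) P)
    (hσ : ∀ j, 0 < σ j)
    (hint1 : ∀ j, 1 ≤ j → Integrable (ξ j) P)
    (hmean : ∀ j, 1 ≤ j → (∫ ω, ξ j ω ∂P) = 0)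
    (hint2 : ∀ j, 1 ≤ j → Integrable (fun ω => ξ j ω ^ 2) P)
    (hvar : ∀ j, 1 ≤ j → (∫ ω, ξ j ω ^ 2 ∂P) = σ j ^ 2)
    (hs : ∀ n, s n = Real.sqrt (∑ j ∈ Finset.range n, σ (j + 1) ^ 2))
    (n : ℕ) (hn : 1 ≤ n) (lam : ℕ → Ω → ℝ) (Λ : ℝ) (hΛ : 0 ≤ Λ)
    (hlam_adapt : ∀ j, Measurable[F j] (lam j))
    (hlam_bd : ∀ j, ∀ᵐ ω ∂P, lam j ω ∈ Set.Icc 0 Λ)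
    (t : ℕ → ℝ) (ht : ∀ j, t j = (∑ k ∈ Finset.range j, σ (k + 1) ^ 2) / s n ^ 2)
    (X : ℕ → Ω → ℝ)
    (hX : ∀ j ω, X j ω = (1 / s n) * ∑ k ∈ Finset.range j, lam k ω * ξ (k + 1) ω)
    (g : ℝ × ℝ → ℝ) (K α : ℝ) (hK : 0 < K) (hα : 0 < α) (hα1 : α ≤ 1)
    (hg : ∀ t₁ ∈ Set.Icc (0:ℝ) 1, ∀ t₂ ∈ Set.Icc (0:ℝ) 1, ∀ x₁ x₂ : ℝ,
      |g (t₁, x₁) - g (t₂, x₂)| ≤ K * (Real.sqrt |t₁ - t₂| + |x₁ - x₂|) ^ α)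
    (that : ℕ → Ω → ℝ)
    (hthat_meas : ∀ j, Measurable (that j))
    (hthat : ∀ j, ∀ᵐ ω ∂P, that j ω ∈ Set.Icc (t j) (t (j + 1))) :
    |∫ ω, ∑ j ∈ Finset.range n,
        σ (j + 1) ^ 2 / s n ^ 2 * (g (that j ω, X (j + 1) ω) - g (t j, X j ω)) ∂P|
      ≤ K * (1 + Λ ^ α) *
        ((Finset.Icc 1 n).sup' (Finset.nonempty_Icc.mpr hn) (fun j => σ j / s n)) ^ α := by
  classical
  have hsum_pos : 0 < ∑ j ∈ Finset.range n, σ (j + 1) ^ 2 :=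
    Finset.sum_pos (fun i _ => pow_pos (hσ _) 2) ⟨0, Finset.mem_range.mpr hn⟩
  have hsn : 0 < s n := by rw [hs]; exact Real.sqrt_pos.mpr hsum_pos
  have hsn2 : s n ^ 2 = ∑ j ∈ Finset.range n, σ (j + 1) ^ 2 := by
    rw [hs]; exact Real.sq_sqrt hsum_pos.le
  set M : ℝ := (Finset.Icc 1 n).sup' (Finset.nonempty_Icc.mpr hn) (fun j => σ j / s n)
    with hMdef
  have hMle : ∀ j, j < n → σ (j + 1) / s n ≤ M := by
    intro j hj
    exact Finset.le_sup' (fun j => σ j / s n) (Finset.mem_Icc.mpr ⟨Nat.le_add_left 1 j, Nat.succ_le_of_lt hj⟩)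
  have hM0 : 0 < M := lt_of_lt_of_le (div_pos (hσ 1) hsn) (hMle 0 hn)
  have ht01 : ∀ j, j ≤ n → t j ∈ Set.Icc (0:ℝ) 1 := by
    intro j hj
    rw [ht]
    constructor
    · positivity
    · rw [div_le_one (by positivity), hsn2]
      exact Finset.sum_le_sum_of_subset_of_nonneg (Finset.range_subset_range.mpr hj)
        (fun i _ _ => sq_nonneg _)
  have htdiff : ∀ j, t (j + 1) - t j = σ (j + 1) ^ 2 / s n ^ 2 := by
    intro j
    rw [ht, ht, Finset.sum_range_succ, add_div, add_sub_cancel_left]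
  have hξmeas : ∀ k : ℕ, Measurable (ξ (k + 1)) :=
    fun k => (hadapt (k + 1) (Nat.le_add_left 1 k)).mono (F.le _) le_rfl
  have hlammeas : ∀ k, Measurable (lam k) := fun k => (hlam_adapt k).mono (F.le _) le_rfl
  have hXmeas : ∀ j, Measurable (X j) := by
    intro j
    have hXj : X j = fun ω => (1 / s n) * ∑ k ∈ Finset.range j, lam k ω * ξ (k + 1) ω :=
      funext (hX j)
    rw [hXj]
    exact (Finset.measurable_sum _ (fun k _ => (hlammeas k).mul (hξmeas k))).const_mul _
  set G : ℝ × ℝ → ℝ := fun p => g (max 0 (min p.1 1), p.2) with hGdef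
  have hGcont : Continuous G := my_holder_cont g K α hK hα hg
  have hGeq : ∀ a ∈ Set.Icc (0:ℝ) 1, ∀ x : ℝ, G (a, x) = g (a, x) := by
    intro a ha x
    simp only [hGdef]
    rw [min_eq_left ha.2, max_eq_right ha.1]
  set h : ℕ → Ω → ℝ := fun j ω => g (that j ω, X (j + 1) ω) - g (t j, X j ω) with hhdef
  have hae : ∀ j, j < n → ∀ᵐ ω ∂P,
      |h j ω| ≤ K * (σ (j + 1) / s n) ^ α + K * Λ ^ α * (|ξ (j + 1) ω| ^ α / s n ^ α) ∧
      h j ω = G (that j ω, X (j + 1) ω) - G (t j, X j ω) := by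
    intro j hj
    filter_upwards [hthat j, hlam_bd j] with ω hω hlamω
    have htj := ht01 j hj.le
    have htj1 := ht01 (j + 1) hj
    have hthat01 : that j ω ∈ Set.Icc (0:ℝ) 1 := ⟨htj.1.trans hω.1, hω.2.trans htj1.2⟩
    constructor
    · have e1 : |that j ω - t j| ≤ σ (j + 1) ^ 2 / s n ^ 2 := by
        rw [abs_of_nonneg (by linarith [hω.1])]
        have := htdiff j
        linarith [hω.2]
      have e2 : Real.sqrt |that j ω - t j| ≤ σ (j + 1) / s n := by
        refine (Real.sqrt_le_sqrt e1).trans ?_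
        rw [show σ (j + 1) ^ 2 / s n ^ 2 = (σ (j + 1) / s n) ^ 2 by rw [div_pow],
          Real.sqrt_sq (div_nonneg (hσ _).le hsn.le)]
      have e3' : X (j + 1) ω - X j ω = (1 / s n) * (lam j ω * ξ (j + 1) ω) := by
        rw [hX, hX, Finset.sum_range_succ, mul_add]
        ring
      have e3 : |X (j + 1) ω - X j ω| ≤ Λ * (|ξ (j + 1) ω| / s n) := by
        rw [e3', abs_mul, abs_mul, abs_of_nonneg (by positivity : (0:ℝ) ≤ 1 / s n),
          abs_of_nonneg hlamω.1]
        have e5 : lam j ω * |ξ (j + 1) ω| ≤ Λ * |ξ (j + 1) ω| :=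
          mul_le_mul_of_nonneg_right hlamω.2 (abs_nonneg _)
        calc (1 / s n) * (lam j ω * |ξ (j + 1) ω|) ≤ (1 / s n) * (Λ * |ξ (j + 1) ω|) :=
              mul_le_mul_of_nonneg_left e5 (by positivity)
          _ = Λ * (|ξ (j + 1) ω| / s n) := by ring
      have e4 := hg (that j ω) hthat01 (t j) htj (X (j + 1) ω) (X j ω)
      have e6 : |h j ω| ≤ K * ((σ (j + 1) / s n) + Λ * (|ξ (j + 1) ω| / s n)) ^ α := by
        refine e4.trans ?_
        refine mul_le_mul_of_nonneg_left (Real.rpow_le_rpow (by positivity) ?_ hα.le) hK.le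
        exact add_le_add e2 e3
      refine e6.trans ?_
      have e7 : ((σ (j + 1) / s n) + Λ * (|ξ (j + 1) ω| / s n)) ^ α ≤
          (σ (j + 1) / s n) ^ α + (Λ * (|ξ (j + 1) ω| / s n)) ^ α :=
        my_rpow_add_le (div_nonneg (hσ _).le hsn.le) (by positivity) hα.le hα1
      have e8 : (Λ * (|ξ (j + 1) ω| / s n)) ^ α = Λ ^ α * (|ξ (j + 1) ω| ^ α / s n ^ α) := by
        rw [Real.mul_rpow hΛ (by positivity), Real.div_rpow (abs_nonneg _) hsn.le]
      calc K * ((σ (j + 1) / s n) + Λ * (|ξ (j + 1) ω| / s n)) ^ α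
          ≤ K * ((σ (j + 1) / s n) ^ α + (Λ * (|ξ (j + 1) ω| / s n)) ^ α) :=
            mul_le_mul_of_nonneg_left e7 hK.le
        _ = K * (σ (j + 1) / s n) ^ α + K * Λ ^ α * (|ξ (j + 1) ω| ^ α / s n ^ α) := by
            rw [e8]; ring
    · rw [hhdef]
      simp only
      rw [hGeq _ hthat01, hGeq _ htj]
  have hint_ξα : ∀ j : ℕ, Integrable (fun ω => |ξ (j + 1) ω| ^ α) P := by
    intro j
    refine Integrable.mono ((integrable_const (1:ℝ)).add (hint2 (j + 1) (Nat.le_add_left 1 j)))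
      ((hξmeas j).abs.pow_const α).aestronglyMeasurable ?_
    filter_upwards with ω
    rw [Real.norm_eq_abs, Real.norm_eq_abs, abs_of_nonneg (Real.rpow_nonneg (abs_nonneg _) _)]
    exact (my_abs_rpow_le_one_add_sq hα hα1).trans (le_abs_self _)
  have hBint : ∀ j : ℕ, Integrable
      (fun ω => K * (σ (j + 1) / s n) ^ α + K * Λ ^ α * (|ξ (j + 1) ω| ^ α / s n ^ α)) P := by
    intro j
    refine (integrable_const _).add ?_
    have hrw : (fun ω => K * Λ ^ α * (|ξ (j + 1) ω| ^ α / s n ^ α)) =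
        fun ω => (K * Λ ^ α / s n ^ α) * |ξ (j + 1) ω| ^ α := by
      funext ω; ring
    rw [hrw]
    exact (hint_ξα j).const_mul _
  have hhmeas : ∀ j, j < n → AEStronglyMeasurable (h j) P := by
    intro j hj
    have hm : Measurable fun ω => G (that j ω, X (j + 1) ω) - G (t j, X j ω) :=
      (hGcont.measurable.comp ((hthat_meas j).prodMk (hXmeas (j + 1)))).sub
        (hGcont.measurable.comp (measurable_const.prodMk (hXmeas j)))
    refine hm.aestronglyMeasurable.congr ?_
    filter_upwards [hae j hj] with ω hω
    exact hω.2.symm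
  have hhint : ∀ j, j < n → Integrable (h j) P := by
    intro j hj
    refine Integrable.mono (hBint j) (hhmeas j hj) ?_
    filter_upwards [hae j hj] with ω hω
    rw [Real.norm_eq_abs, Real.norm_eq_abs]
    refine (le_abs_self _).trans ?_
    rw [abs_abs]
    exact hω.1.trans (le_abs_self _)
  have hjensen : ∀ j : ℕ, ∫ ω, |ξ (j + 1) ω| ^ α ∂P ≤ σ (j + 1) ^ α :=
    fun j => my_jensen P (ξ (j + 1)) (hξmeas j) (σ (j + 1)) α (hσ _) hα hα1
      (hint2 (j + 1) (Nat.le_add_left 1 j)) (hvar (j + 1) (Nat.le_add_left 1 j))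
  have hbound : ∀ j, j < n → ∫ ω, |h j ω| ∂P ≤ K * (1 + Λ ^ α) * M ^ α := by
    intro j hj
    have h1 : ∫ ω, |h j ω| ∂P ≤
        ∫ ω, (K * (σ (j + 1) / s n) ^ α + K * Λ ^ α * (|ξ (j + 1) ω| ^ α / s n ^ α)) ∂P := by
      refine integral_mono_ae (hhint j hj).abs (hBint j) ?_
      filter_upwards [hae j hj] with ω hω using hω.1
    have h2 : ∫ ω, (K * (σ (j + 1) / s n) ^ α + K * Λ ^ α * (|ξ (j + 1) ω| ^ α / s n ^ α)) ∂P
        = K * (σ (j + 1) / s n) ^ α +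
          (K * Λ ^ α / s n ^ α) * ∫ ω, |ξ (j + 1) ω| ^ α ∂P := by
      have hrw : (fun ω => K * (σ (j + 1) / s n) ^ α + K * Λ ^ α * (|ξ (j + 1) ω| ^ α / s n ^ α)) =
          fun ω => K * (σ (j + 1) / s n) ^ α + (K * Λ ^ α / s n ^ α) * |ξ (j + 1) ω| ^ α := by
        funext ω; ring
      rw [hrw, integral_add (integrable_const _) ((hint_ξα j).const_mul _), integral_const,
        MeasureTheory.integral_const_mul]
      simp
    have hsα : (0:ℝ) < s n ^ α := Real.rpow_pos_of_pos hsn α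
    have h3 : (K * Λ ^ α / s n ^ α) * ∫ ω, |ξ (j + 1) ω| ^ α ∂P ≤
        (K * Λ ^ α / s n ^ α) * σ (j + 1) ^ α :=
      mul_le_mul_of_nonneg_left (hjensen j) (by positivity)
    have h4 : (K * Λ ^ α / s n ^ α) * σ (j + 1) ^ α = K * Λ ^ α * (σ (j + 1) / s n) ^ α := by
      rw [Real.div_rpow (hσ _).le hsn.le]
      field_simp
    have h5 : (σ (j + 1) / s n) ^ α ≤ M ^ α :=
      Real.rpow_le_rpow (div_nonneg (hσ _).le hsn.le) (hMle j hj) hα.le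
    calc ∫ ω, |h j ω| ∂P
        ≤ K * (σ (j + 1) / s n) ^ α + (K * Λ ^ α / s n ^ α) * ∫ ω, |ξ (j + 1) ω| ^ α ∂P :=
          h1.trans_eq h2
      _ ≤ K * (σ (j + 1) / s n) ^ α + K * Λ ^ α * (σ (j + 1) / s n) ^ α := by
          rw [← h4]; exact add_le_add_right h3 _
      _ = K * (1 + Λ ^ α) * (σ (j + 1) / s n) ^ α := by ring
      _ ≤ K * (1 + Λ ^ α) * M ^ α := by
          refine mul_le_mul_of_nonneg_left h5 ?_
          have : (0:ℝ) ≤ Λ ^ α := Real.rpow_nonneg hΛ α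
          positivity
  have hsum1 : ∑ j ∈ Finset.range n, σ (j + 1) ^ 2 / s n ^ 2 = 1 := by
    rw [← Finset.sum_div, ← hsn2, div_self (by positivity)]
  have hint_term : ∀ j ∈ Finset.range n,
      Integrable (fun ω => σ (j + 1) ^ 2 / s n ^ 2 * h j ω) P :=
    fun j hj => ((hhint j (Finset.mem_range.mp hj)).const_mul _)
  calc |∫ ω, ∑ j ∈ Finset.range n, σ (j + 1) ^ 2 / s n ^ 2 * h j ω ∂P|
      = |∑ j ∈ Finset.range n, ∫ ω, σ (j + 1) ^ 2 / s n ^ 2 * h j ω ∂P| := by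
        rw [integral_finset_sum _ hint_term]
    _ ≤ ∑ j ∈ Finset.range n, |∫ ω, σ (j + 1) ^ 2 / s n ^ 2 * h j ω ∂P| :=
        Finset.abs_sum_le_sum_abs _ _
    _ ≤ ∑ j ∈ Finset.range n, σ (j + 1) ^ 2 / s n ^ 2 * (K * (1 + Λ ^ α) * M ^ α) := by
        refine Finset.sum_le_sum (fun j hj => ?_)
        rw [MeasureTheory.integral_const_mul, abs_mul,
          abs_of_nonneg (by positivity : (0:ℝ) ≤ σ (j + 1) ^ 2 / s n ^ 2)]
        refine mul_le_mul_of_nonneg_left ?_ (by positivity)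
        refine le_trans ?_ (hbound j (Finset.mem_range.mp hj))
        simpa [Real.norm_eq_abs] using
          norm_integral_le_integral_norm (μ := P) (h j)
    _ = K * (1 + Λ ^ α) * M ^ α := by
        rw [← Finset.sum_mul, hsum1, one_mul]
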